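/- If G is a friendly-edge-colorable graph, then every proper edge coloring of G using exactly χ'(G) colors has all color classes equal to maximum matchings of G (each of size ν(G)). -/

import Mathlib

open scoped Classical

/-- `M` is a matching of `G`, given as a finite set of edges. -/
def IsMatchingFinset {V : Type*} (G : SimpleGraph V) (M : Finset (Sym2 V)) : Prop :=
  (M : Set (Sym2 V)) ⊆ G.edgeSet ∧
    ∀ e ∈ M, ∀ f ∈ M, e ≠ f → ∀ v : V, ¬(v ∈ e ∧ v ∈ f)

/-- ν(G): the maximum size of a matching of `G`. -/
noncomputable def matchingNumber {V : Type*} (G : SimpleGraph V) : ℕ :=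
  sSup {n | ∃ M : Finset (Sym2 V), IsMatchingFinset G M ∧ M.card = n}

/-- A proper edge coloring of `G` using colors `< n`. -/
def IsProperEdgeColoring {V : Type*} (G : SimpleGraph V) (n : ℕ) (c : Sym2 V → ℕ) : Prop :=
  (∀ e ∈ G.edgeSet, c e < n) ∧
    ∀ e ∈ G.edgeSet, ∀ f ∈ G.edgeSet, e ≠ f → (∃ v : V, v ∈ e ∧ v ∈ f) → c e ≠ c f

/-- χ'(G): the edge chromatic index of `G`. -/
noncomputable def chromaticIndex {V : Type*} (G : SimpleGraph V) : ℕ :=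
  sInf {n | ∃ c : Sym2 V → ℕ, IsProperEdgeColoring G n c}

/-- `G` is friendly-edge-colorable: its edge set is partitioned into maximum matchings. -/
noncomputable def Friendly {V : Type*} [Fintype V] (G : SimpleGraph V) : Prop :=
  ∃ P : Finset (Finset (Sym2 V)),
    (∀ M ∈ P, IsMatchingFinset G M ∧ M.card = matchingNumber G) ∧
    (∀ e, e ∈ G.edgeFinset ↔ ∃ M ∈ P, e ∈ M) ∧
    ∀ M ∈ P, ∀ N ∈ P, M ≠ N → Disjoint M N

/-- The graph `G` with vertex `x` deleted. -/
def delVert {V : Type*} (G : SimpleGraph V) (x : V) : SimpleGraph {v : V // v ≠ x} :=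
  G.induce {v : V | v ≠ x}

/-- `G` has a perfect matching. -/
def HasPerfectMatchingFinset {V : Type*} (G : SimpleGraph V) : Prop :=
  ∃ M : Finset (Sym2 V), IsMatchingFinset G M ∧ ∀ v : V, ∃ e ∈ M, v ∈ e

/-- `G` is factor-critical. -/
def FactorCritical {V : Type*} (G : SimpleGraph V) : Prop :=
  G.Connected ∧ ∀ x : V, HasPerfectMatchingFinset (delVert G x)

theorem stmt_10 {V : Type*} [Fintype V] (G : SimpleGraph V) (hG : Friendly G)
    (c : Sym2 V → ℕ) (hc : IsProperEdgeColoring G (chromaticIndex G) c) :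
    ∀ i < chromaticIndex G,
      IsMatchingFinset G (G.edgeFinset.filter (fun e => c e = i)) ∧
      (G.edgeFinset.filter (fun e => c e = i)).card = matchingNumber G := by
  classical
  obtain ⟨P, hPmax, hPcov, hPdisj⟩ := hG
  set k := chromaticIndex G with hk
  set ν := matchingNumber G with hν
  set cls : ℕ → Finset (Sym2 V) := fun i => G.edgeFinset.filter (fun e => c e = i) with hcls
  -- any matching has card ≤ ν
  have hle : ∀ M : Finset (Sym2 V), IsMatchingFinset G M → M.card ≤ ν := by
    intro M hM
    apply le_csSup
    · refine ⟨G.edgeFinset.card, ?_⟩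
      rintro n ⟨N, hN, rfl⟩
      exact Finset.card_le_card fun e he => SimpleGraph.mem_edgeFinset.2 (hN.1 he)
    · exact ⟨M, hM, rfl⟩
  -- each color class is a matching
  have hmatch : ∀ i, IsMatchingFinset G (cls i) := by
    intro i
    constructor
    · intro e he
      rw [Finset.mem_coe, hcls, Finset.mem_filter] at he
      exact SimpleGraph.mem_edgeFinset.1 he.1
    · intro e he f hf hef v hv
      rw [hcls, Finset.mem_filter] at he hf
      exact hc.2 e (SimpleGraph.mem_edgeFinset.1 he.1) f (SimpleGraph.mem_edgeFinset.1 hf.1)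
        hef ⟨v, hv⟩ (he.2.trans hf.2.symm)
  -- k ≤ P.card : build a coloring from P
  have hkP : k ≤ P.card := by
    let eq := Fintype.equivFin {M // M ∈ P}
    have hcard : Fintype.card {M // M ∈ P} = P.card := Fintype.card_coe P
    let c' : Sym2 V → ℕ := fun e =>
      if h : e ∈ G.edgeFinset then
        (eq ⟨Classical.choose ((hPcov e).1 h),
              (Classical.choose_spec ((hPcov e).1 h)).1⟩ : Fin _).val
      else 0
    have hc' : IsProperEdgeColoring G P.card c' := by
      constructor
      · intro e he
        have he' : e ∈ G.edgeFinset := SimpleGraph.mem_edgeFinset.2 he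
        simp only [c', dif_pos he']
        exact lt_of_lt_of_le (Fin.is_lt _) (le_of_eq hcard)
      · intro e he f hf hef ⟨v, hv⟩ hcc
        have he' : e ∈ G.edgeFinset := SimpleGraph.mem_edgeFinset.2 he
        have hf' : f ∈ G.edgeFinset := SimpleGraph.mem_edgeFinset.2 hf
        simp only [c', dif_pos he', dif_pos hf'] at hcc
        have := eq.injective (Fin.val_injective hcc)
        have hMeq : Classical.choose ((hPcov e).1 he') = Classical.choose ((hPcov f).1 hf') :=
          congrArg Subtype.val this
        set M := Classical.choose ((hPcov e).1 he')
        have hMP := (Classical.choose_spec ((hPcov e).1 he')).1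
        have heM := (Classical.choose_spec ((hPcov e).1 he')).2
        have hfM : f ∈ M := by rw [hMeq]; exact (Classical.choose_spec ((hPcov f).1 hf')).2
        exact (hPmax M hMP).1.2 e heM f hfM hef v hv
    exact Nat.sInf_le ⟨c', hc'⟩
  -- |E| = P.card * ν
  have hEP : G.edgeFinset.card = P.card * ν := by
    have hU : G.edgeFinset = P.biUnion (fun M => M) := by
      ext e
      simp only [Finset.mem_biUnion]
      exact hPcov e
    rw [hU, Finset.card_biUnion (fun M hM N hN hMN => hPdisj M hM N hN hMN)]
    rw [Finset.sum_congr rfl (fun M hM => (hPmax M hM).2)]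
    simp [mul_comm]
  -- |E| = Σ_{i<k} |cls i|
  have hE2 : ∑ i ∈ Finset.range k, (cls i).card = G.edgeFinset.card := by
    have hU : G.edgeFinset = (Finset.range k).biUnion cls := by
      ext e
      simp only [Finset.mem_biUnion, Finset.mem_range, hcls, Finset.mem_filter]
      constructor
      · intro he
        exact ⟨c e, hc.1 e (SimpleGraph.mem_edgeFinset.1 he), he, rfl⟩
      · rintro ⟨i, hi, he, rfl⟩; exact he
    conv_rhs => rw [hU]
    rw [Finset.card_biUnion]
    intro i hi j hj hij
    rw [Function.onFun, Finset.disjoint_left]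
    intro e hei hej
    rw [hcls, Finset.mem_filter] at hei hej
    exact hij (hei.2.symm.trans hej.2)
  have hsum_ge : k * ν ≤ ∑ i ∈ Finset.range k, (cls i).card := by
    rw [hE2, hEP]
    exact Nat.mul_le_mul_right ν hkP
  have hsum_le : ∀ i ∈ Finset.range k, (cls i).card ≤ ν := fun i _ => hle _ (hmatch i)
  have hall : ∀ i ∈ Finset.range k, (cls i).card = ν := by
    by_contra h
    push_neg at h
    obtain ⟨j, hj, hne⟩ := h
    have hlt : (cls j).card < ν := lt_of_le_of_ne (hsum_le j hj) hne
    have : ∑ i ∈ Finset.range k, (cls i).card < ∑ i ∈ Finset.range k, ν :=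
      Finset.sum_lt_sum hsum_le ⟨j, hj, hlt⟩
    rw [Finset.sum_const, Finset.card_range, smul_eq_mul] at this
    omega
  intro i hi
  exact ⟨hmatch i, hall i (Finset.mem_range.2 hi)⟩
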